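/- For all integers n ≥ m ≥ 1, the number of Dyck paths of semilength n with exactly m peaks equals the Narayana number N_n^m = (1/n) · C(n, m-1) · C(n, m). -/

import Mathlib

/-- The alphabet {U, D} of Dyck path steps. -/
inductive Step : Type
  | U : Step
  | D : Step
  deriving DecidableEq

/-- `isDyck n w` : `w` is a Dyck path of semilength `n`, i.e. a word of length `2n` over
`{U, D}` with `n` occurrences of `U` and `n` occurrences of `D` such that every prefix
contains at least as many `U`'s as `D`'s. -/
def isDyck (n : ℕ) (w : List Step) : Prop :=
  w.length = 2 * n ∧
  w.count Step.U = n ∧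
  w.count Step.D = n ∧
  (∀ p : ℕ, (w.take p).count Step.D ≤ (w.take p).count Step.U)

/-- `peaks w` : the number of indices `i` with `w_i = U` and `w_{i+1} = D`. -/
def peaks (w : List Step) : ℕ := (w.zip w.tail).count (Step.U, Step.D)

namespace Nara

/-- bounded prefix condition -/
def pOK (w : List Step) : Prop :=
  ∀ p ≤ w.length, (w.take p).count Step.D ≤ (w.take p).count Step.U

instance : DecidablePred pOK := fun _ => Nat.decidableBallLE _ _

/-- recursive peak counter -/
def pk : List Step → ℕ
  | [] => 0
  | [_] => 0
  | a :: b :: t => (if a = Step.U ∧ b = Step.D then 1 else 0) + pk (b :: t)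

lemma peaks_eq_pk (w : List Step) : peaks w = pk w := by
  induction w with
  | nil => rfl
  | cons a t ih =>
    cases t with
    | nil => rfl
    | cons b s =>
      unfold peaks at *
      rw [List.tail_cons, List.zip_cons_cons, List.count_cons]
      simp only [pk]
      rw [show (b :: s).tail = s from rfl] at ih
      rw [ih]
      by_cases h : a = Step.U ∧ b = Step.D
      · obtain ⟨h1, h2⟩ := h; subst h1; subst h2; simp; omega
      · have hne : ¬ ((a, b) = (Step.U, Step.D)) := by
          simp only [Prod.mk.injEq]; tauto
        simp [hne, h]

lemma pk_concat (w : List Step) (c : Step) :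
    pk (w ++ [c]) = pk w + (if w.getLast? = some Step.U ∧ c = Step.D then 1 else 0) := by
  induction w with
  | nil => simp [pk]
  | cons a t ih =>
    cases t with
    | nil =>
      simp only [List.nil_append, List.cons_append, pk, List.getLast?_singleton]
      by_cases h : a = Step.U ∧ c = Step.D
      · simp [h, Option.some.injEq]
      · have h2 : ¬ (some a = some Step.U ∧ c = Step.D) := by
          simp only [Option.some.injEq]; tauto
        simp [h, h2]
    | cons b s =>
      simp only [List.cons_append, pk] at *
      rw [ih, List.getLast?_cons_cons]
      omega

lemma count_U_add_count_D (w : List Step) : w.count Step.U + w.count Step.D = w.length := by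
  induction w with
  | nil => rfl
  | cons a t ih =>
    cases a <;> simp [List.count_cons, ← ih] <;> omega

lemma pOK_nil : pOK ([] : List Step) := by
  intro p hp
  simp at hp
  subst hp
  simp

lemma pOK_count {w : List Step} (h : pOK w) : w.count Step.D ≤ w.count Step.U := by
  have := h w.length le_rfl
  simpa using this

lemma pOK_concat {w : List Step} {c : Step} :
    pOK (w ++ [c]) ↔ pOK w ∧ (w ++ [c]).count Step.D ≤ (w ++ [c]).count Step.U := by
  constructor
  · intro h
    refine ⟨?_, ?_⟩
    · intro p hp
      have h2 := h p (by simp; omega)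
      rwa [List.take_append, Nat.sub_eq_zero_of_le hp,
        List.take_zero, List.append_nil] at h2
    · have h2 := h (w ++ [c]).length le_rfl
      rwa [List.take_length] at h2
  · rintro ⟨h1, h2⟩
    intro p hp
    rcases le_or_gt p w.length with h3 | h3
    · rw [List.take_append, Nat.sub_eq_zero_of_le h3,
        List.take_zero, List.append_nil]
      exact h1 p h3
    · rw [List.take_of_length_le (by simpa using h3)]
      exact h2

/-- all words of a given length, built by appending on the right -/
def words : ℕ → Finset (List Step)
  | 0 => {[]}
  | L + 1 => ((words L).image (fun w => w ++ [Step.U])) ∪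
      ((words L).image (fun w => w ++ [Step.D]))

lemma mem_words {L : ℕ} {w : List Step} : w ∈ words L ↔ w.length = L := by
  induction L generalizing w with
  | zero => simp [words]
  | succ L ih =>
    simp only [words, Finset.mem_union, Finset.mem_image]
    constructor
    · rintro (⟨v, hv, rfl⟩ | ⟨v, hv, rfl⟩) <;> simp [ih.mp hv]
    · intro hw
      rcases List.eq_nil_or_concat w with rfl | ⟨v, c, rfl⟩
      · simp at hw
      · rw [List.concat_eq_append] at hw ⊢
        have hv : v ∈ words L := ih.mpr (by simp at hw; omega)
        cases c
        · exact Or.inl ⟨v, hv, rfl⟩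
        · exact Or.inr ⟨v, hv, rfl⟩

/-- the predicate we count -/
def P (i j p : ℕ) (c : Step) (w : List Step) : Prop :=
  w.count Step.U = i ∧ w.count Step.D = j ∧ pOK w ∧ pk w = p ∧ w.getLast? = some c

instance (i j p : ℕ) (c : Step) : DecidablePred (P i j p c) := fun w => by
  unfold P; infer_instance

def cnt (i j p : ℕ) (c : Step) : ℕ := ((words (i + j)).filter (P i j p c)).card

lemma filter_words_succ (L : ℕ) (Q : List Step → Prop) [DecidablePred Q] :
    ((words (L + 1)).filter Q).card
      = ((words L).filter (fun w => Q (w ++ [Step.U]))).card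
      + ((words L).filter (fun w => Q (w ++ [Step.D]))).card := by
  have hU : Function.Injective (fun w : List Step => w ++ [Step.U]) :=
    List.append_left_injective _
  have hD : Function.Injective (fun w : List Step => w ++ [Step.D]) :=
    List.append_left_injective _
  rw [show words (L + 1) = ((words L).image (fun w => w ++ [Step.U])) ∪
      ((words L).image (fun w => w ++ [Step.D])) from rfl]
  rw [Finset.filter_union]
  rw [Finset.card_union_of_disjoint]
  · rw [Finset.filter_image, Finset.filter_image,
      Finset.card_image_of_injective _ hU, Finset.card_image_of_injective _ hD]
  · refine Finset.disjoint_left.mpr ?_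
    intro w hw hw'
    simp only [Finset.mem_filter, Finset.mem_image] at hw hw'
    obtain ⟨⟨v, _, rfl⟩, _⟩ := hw
    obtain ⟨⟨v', _, h⟩, _⟩ := hw'
    have h1 : (v' ++ [Step.D]).getLast? = (v ++ [Step.U]).getLast? := by rw [h]
    rw [List.getLast?_concat, List.getLast?_concat] at h1
    simp at h1

lemma card_filter_split_last (s : Finset (List Step)) (Q : List Step → Prop)
    [DecidablePred Q] :
    (s.filter Q).card
      = (s.filter fun w => Q w ∧ w.getLast? = some Step.U).card
      + (s.filter fun w => Q w ∧ w.getLast? = some Step.D).card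
      + (s.filter fun w => Q w ∧ w = []).card := by
  have h1 : s.filter Q = (s.filter fun w => Q w ∧ w.getLast? = some Step.U)
      ∪ ((s.filter fun w => Q w ∧ w.getLast? = some Step.D)
      ∪ (s.filter fun w => Q w ∧ w = [])) := by
    ext w
    simp only [Finset.mem_filter, Finset.mem_union]
    constructor
    · rintro ⟨hs, hq⟩
      rcases hlast : w.getLast? with _ | c
      · exact Or.inr (Or.inr ⟨hs, hq, List.getLast?_eq_none_iff.mp hlast⟩)
      · cases c
        · exact Or.inl ⟨hs, hq, rfl⟩
        · exact Or.inr (Or.inl ⟨hs, hq, rfl⟩)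
    · rintro (⟨hs, hq, _⟩ | ⟨hs, hq, _⟩ | ⟨hs, hq, _⟩) <;> exact ⟨hs, hq⟩
  rw [h1, Finset.card_union_of_disjoint, Finset.card_union_of_disjoint]
  · ring
  · refine Finset.disjoint_left.mpr ?_
    rintro w hw hw'
    simp only [Finset.mem_filter] at hw hw'
    obtain ⟨_, _, h2⟩ := hw
    obtain ⟨_, _, rfl⟩ := hw'
    simp at h2
  · refine Finset.disjoint_left.mpr ?_
    rintro w hw hw'
    simp only [Finset.mem_filter, Finset.mem_union] at hw hw'
    obtain ⟨_, _, h2⟩ := hw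
    rcases hw' with ⟨_, _, h3⟩ | ⟨_, _, rfl⟩
    · rw [h2] at h3; simp at h3
    · simp at h2

lemma cnt_eq_zero_of_lt {i j p : ℕ} {c : Step} (h : i < j) : cnt i j p c = 0 := by
  rw [cnt, Finset.card_eq_zero, Finset.filter_eq_empty_iff]
  rintro w _ ⟨hU, hD, hOK, _, _⟩
  have := pOK_count hOK
  omega

lemma cnt_D_of_noD {i p : ℕ} : cnt i 0 p Step.D = 0 := by
  rw [cnt, Finset.card_eq_zero, Finset.filter_eq_empty_iff]
  rintro w _ ⟨_, hD, _, _, hlast⟩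
  have hmem : Step.D ∈ w := by
    rcases List.eq_nil_or_concat w with rfl | ⟨v, c, rfl⟩
    · simp at hlast
    · rw [List.concat_eq_append, List.getLast?_concat] at hlast
      simp only [Option.some.injEq] at hlast
      subst hlast
      simp
  rw [← List.count_pos_iff] at hmem
  omega

lemma cnt_zero_zero {p : ℕ} {c : Step} : cnt 0 0 p c = 0 := by
  rw [cnt, Finset.card_eq_zero, Finset.filter_eq_empty_iff]
  rintro w hw ⟨_, _, _, _, hlast⟩
  rw [show (0 + 0 : ℕ) = 0 from rfl] at hw
  rw [mem_words] at hw
  rw [List.length_eq_zero_iff] at hw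
  subst hw
  simp at hlast
lemma cnt_U_succ (i j p : ℕ) :
    cnt (i + 1) j p Step.U
      = cnt i j p Step.U + cnt i j p Step.D
        + (if i = 0 ∧ j = 0 ∧ p = 0 then 1 else 0) := by
  have e1 : cnt (i + 1) j p Step.U
      = ((words (i + j)).filter (fun w => P (i + 1) j p Step.U (w ++ [Step.U]))).card := by
    rw [cnt, show i + 1 + j = (i + j) + 1 by omega, filter_words_succ]
    have hD : (words (i + j)).filter (fun w => P (i + 1) j p Step.U (w ++ [Step.D])) = ∅ := by
      rw [Finset.filter_eq_empty_iff]
      rintro w _ ⟨_, _, _, _, hlast⟩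
      rw [List.getLast?_concat] at hlast
      simp at hlast
    rw [hD]
    simp
  have e2 : (words (i + j)).filter (fun w => P (i + 1) j p Step.U (w ++ [Step.U]))
      = (words (i + j)).filter
          (fun w => w.count Step.U = i ∧ w.count Step.D = j ∧ pOK w ∧ pk w = p) := by
    refine Finset.filter_congr ?_
    intro w _
    unfold P
    rw [pk_concat, pOK_concat, List.getLast?_concat]
    have hUc : (w ++ [Step.U]).count Step.U = w.count Step.U + 1 := by
      simp [List.count_append]
    have hDc : (w ++ [Step.U]).count Step.D = w.count Step.D := by
      simp [List.count_append]
    have hite : (if w.getLast? = some Step.U ∧ Step.U = Step.D then 1 else 0) = 0 := by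
      simp
    rw [hUc, hDc, hite]
    constructor
    · rintro ⟨hU, hD, ⟨hOK, _⟩, hpk, _⟩
      exact ⟨by omega, hD, hOK, by omega⟩
    · rintro ⟨hU, hD, hOK, hpk⟩
      have := pOK_count hOK
      exact ⟨by omega, hD, ⟨hOK, by omega⟩, by omega, rfl⟩
  rw [e1, e2, card_filter_split_last]
  congr 1
  · congr 1
    · rw [cnt]
      refine congrArg _ (Finset.filter_congr ?_)
      intro w _
      unfold P
      tauto
    · rw [cnt]
      refine congrArg _ (Finset.filter_congr ?_)
      intro w _
      unfold P
      tauto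
  · by_cases h : i = 0 ∧ j = 0 ∧ p = 0
    · obtain ⟨rfl, rfl, rfl⟩ := h
      rw [if_pos ⟨rfl, rfl, rfl⟩]
      rw [show ((words (0 + 0)).filter
          (fun w => (w.count Step.U = 0 ∧ w.count Step.D = 0 ∧ pOK w ∧ pk w = 0) ∧ w = []))
          = {[]} from ?_]
      · rfl
      · ext w
        simp only [Finset.mem_filter, Finset.mem_singleton]
        constructor
        · rintro ⟨_, _, rfl⟩
          rfl
        · rintro rfl
          refine ⟨by simp [words], ⟨rfl, rfl, pOK_nil, rfl⟩, rfl⟩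
    · rw [if_neg h, Finset.card_eq_zero, Finset.filter_eq_empty_iff]
      rintro w hw ⟨⟨hU, hD, _, hpk⟩, rfl⟩
      simp only [List.count_nil] at hU hD
      rw [show pk [] = 0 from rfl] at hpk
      exact h ⟨hU.symm, hD.symm, hpk.symm⟩

lemma cnt_D_succ (i j p : ℕ) (h : j + 1 ≤ i) :
    cnt i (j + 1) p Step.D
      = (if 1 ≤ p then cnt i j (p - 1) Step.U else 0) + cnt i j p Step.D := by
  have e1 : cnt i (j + 1) p Step.D
      = ((words (i + j)).filter (fun w => P i (j + 1) p Step.D (w ++ [Step.D]))).card := by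
    rw [cnt, show i + (j + 1) = (i + j) + 1 by omega, filter_words_succ]
    have hU : (words (i + j)).filter (fun w => P i (j + 1) p Step.D (w ++ [Step.U])) = ∅ := by
      rw [Finset.filter_eq_empty_iff]
      rintro w _ ⟨_, _, _, _, hlast⟩
      rw [List.getLast?_concat] at hlast
      simp at hlast
    rw [hU]
    simp
  have e2 : (words (i + j)).filter (fun w => P i (j + 1) p Step.D (w ++ [Step.D]))
      = (words (i + j)).filter
          (fun w => w.count Step.U = i ∧ w.count Step.D = j ∧ pOK w ∧
            pk w + (if w.getLast? = some Step.U then 1 else 0) = p) := by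
    refine Finset.filter_congr ?_
    intro w _
    unfold P
    rw [pk_concat, pOK_concat, List.getLast?_concat]
    have hUc : (w ++ [Step.D]).count Step.U = w.count Step.U := by
      simp [List.count_append]
    have hDc : (w ++ [Step.D]).count Step.D = w.count Step.D + 1 := by
      simp [List.count_append]
    have hite : (if w.getLast? = some Step.U ∧ Step.D = Step.D then 1 else 0)
        = (if w.getLast? = some Step.U then 1 else 0) := by
      simp
    rw [hUc, hDc, hite]
    constructor
    · rintro ⟨hU, hD, ⟨hOK, _⟩, hpk, _⟩
      exact ⟨hU, by omega, hOK, hpk⟩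
    · rintro ⟨hU, hD, hOK, hpk⟩
      exact ⟨hU, by omega, ⟨hOK, by omega⟩, hpk, rfl⟩
  rw [e1, e2, card_filter_split_last]
  have hnil : ((words (i + j)).filter
      (fun w => (w.count Step.U = i ∧ w.count Step.D = j ∧ pOK w ∧
        pk w + (if w.getLast? = some Step.U then 1 else 0) = p) ∧ w = [])).card = 0 := by
    rw [Finset.card_eq_zero, Finset.filter_eq_empty_iff]
    rintro w _ ⟨⟨hU, _, _, _⟩, rfl⟩
    simp only [List.count_nil] at hU
    omega
  rw [hnil, Nat.add_zero]
  congr 1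
  · by_cases hp : 1 ≤ p
    · rw [if_pos hp, cnt]
      refine congrArg _ (Finset.filter_congr ?_)
      intro w _
      unfold P
      constructor
      · rintro ⟨⟨hU, hD, hOK, hpk⟩, hlast⟩
        rw [if_pos hlast] at hpk
        exact ⟨hU, hD, hOK, by omega, hlast⟩
      · rintro ⟨hU, hD, hOK, hpk, hlast⟩
        rw [hlast]
        refine ⟨⟨hU, hD, hOK, ?_⟩, rfl⟩
        rw [if_pos rfl]
        omega
    · rw [if_neg hp, Finset.card_eq_zero, Finset.filter_eq_empty_iff]
      rintro w _ ⟨⟨_, _, _, hpk⟩, hlast⟩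
      rw [if_pos hlast] at hpk
      omega
  · rw [cnt]
    refine congrArg _ (Finset.filter_congr ?_)
    intro w _
    unfold P
    constructor
    · rintro ⟨⟨hU, hD, hOK, hpk⟩, hlast⟩
      rw [hlast] at hpk
      rw [if_neg (by simp)] at hpk
      exact ⟨hU, hD, hOK, by omega, hlast⟩
    · rintro ⟨hU, hD, hOK, hpk, hlast⟩
      rw [hlast]
      refine ⟨⟨hU, hD, hOK, ?_⟩, rfl⟩
      rw [if_neg (by simp)]
      omega
def cpred : ℕ → ℕ → ℕ
  | 0, _ => 0
  | i + 1, p => Nat.choose i p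

lemma cpred_pascal (j q : ℕ) : cpred j q + cpred j (q + 1) = Nat.choose j (q + 1) := by
  cases j with
  | zero => simp [cpred]
  | succ j' => simp [cpred, Nat.choose_succ_succ]

lemma main_ind (s : ℕ) : ∀ i j, i + j = s →
    (∀ p, j ≤ i →
      cnt i j p Step.U + Nat.choose i p * cpred j p = cpred i p * Nat.choose j p)
    ∧ (∀ q, j ≤ i →
      cnt i j (q + 1) Step.D + Nat.choose i q * cpred j (q + 1)
        = cpred i q * Nat.choose j (q + 1))
    ∧ cnt i j 0 Step.D = 0 := by
  induction s using Nat.strong_induction_on with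
  | _ s ih =>
    intro i j hs
    refine ⟨?_, ?_, ?_⟩
    · -- part A
      intro p hji
      cases i with
      | zero =>
        interval_cases j
        rw [cnt_zero_zero]
        simp [cpred]
      | succ i' =>
        rw [cnt_U_succ]
        rcases Nat.lt_or_ge i' j with hlt | hge
        · -- j = i' + 1
          have hj : j = i' + 1 := by omega
          subst hj
          rw [cnt_eq_zero_of_lt hlt, cnt_eq_zero_of_lt hlt,
            if_neg (by omega)]
          rw [show cpred (i' + 1) p = Nat.choose i' p from rfl]
          ring
        · -- j ≤ i'
          have hIH := ih (i' + j) (by omega) i' j rfl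
          cases p with
          | zero =>
            have hA := hIH.1 0 hge
            have hC := hIH.2.2
            rw [hC]
            simp only [Nat.choose_zero_right, Nat.mul_one, Nat.one_mul] at hA ⊢
            rw [show cpred (i' + 1) 0 = Nat.choose i' 0 from rfl, Nat.choose_zero_right]
            cases i' with
            | zero =>
              interval_cases j
              rw [cnt_zero_zero] at hA ⊢
              simp [cpred] at hA ⊢
            | succ i'' =>
              rw [if_neg (by omega)]
              rw [show cpred (i'' + 1) 0 = Nat.choose i'' 0 from rfl,
                Nat.choose_zero_right] at hA
              omega
          | succ q =>
            have hA := hIH.1 (q + 1) hge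
            have hB := hIH.2.1 q hge
            rw [if_neg (by omega)]
            have hp1 : Nat.choose (i' + 1) (q + 1) = Nat.choose i' q + Nat.choose i' (q + 1) :=
              Nat.choose_succ_succ _ _
            have hp2 : cpred i' q + cpred i' (q + 1) = Nat.choose i' (q + 1) :=
              cpred_pascal i' q
            rw [show cpred (i' + 1) (q + 1) = Nat.choose i' (q + 1) from rfl]
            zify at hA hB hp1 hp2 ⊢
            linear_combination hA + hB + (Nat.choose j (q + 1) : ℤ) * hp2
              + (cpred j (q + 1) : ℤ) * hp1
    · -- part B
      intro q hji
      cases j with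
      | zero =>
        rw [cnt_D_of_noD]
        simp [cpred]
      | succ j' =>
        have hji' : j' ≤ i := by omega
        rw [cnt_D_succ _ _ _ hji, if_pos (by omega)]
        have hIH := ih (i + j') (by omega) i j' rfl
        have hA := hIH.1 q hji'
        have hB := hIH.2.1 q hji'
        have hp1 : Nat.choose (j' + 1) (q + 1) = Nat.choose j' q + Nat.choose j' (q + 1) :=
          Nat.choose_succ_succ _ _
        have hp2 : cpred j' q + cpred j' (q + 1) = Nat.choose j' (q + 1) :=
          cpred_pascal j' q
        rw [show cpred (j' + 1) (q + 1) = Nat.choose j' (q + 1) from rfl,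
          show (q + 1 - 1 : ℕ) = q from rfl]
        zify at hA hB hp1 hp2 ⊢
        linear_combination hA + hB - (Nat.choose i q : ℤ) * hp2
          - (cpred i q : ℤ) * hp1
    · -- part C
      cases j with
      | zero => exact cnt_D_of_noD
      | succ j' =>
        rcases Nat.lt_or_ge i (j' + 1) with hlt | hge
        · exact cnt_eq_zero_of_lt hlt
        · rw [cnt_D_succ _ _ _ hge, if_neg (by omega), Nat.zero_add]
          exact (ih (i + j') (by omega) i j' rfl).2.2
lemma cnt_U_diag (n m : ℕ) : cnt n n m Step.U = 0 := by
  have h := (main_ind (n + n) n n rfl).1 m le_rfl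
  rw [Nat.mul_comm] at h
  omega

end Nara

/-- For all `n ≥ m ≥ 1`, the number of Dyck paths of semilength `n` with exactly `m` peaks
equals the Narayana number `N_n^m = (1/n) · C(n, m-1) · C(n, m)`. -/
theorem dyck_peaks_count_eq_narayana (n m : ℕ) (hm : 1 ≤ m) (hmn : m ≤ n) :
    ({w : List Step | isDyck n w ∧ peaks w = m}.ncard : ℚ) =
      (1 / (n : ℚ)) * (Nat.choose n (m - 1) : ℚ) * (Nat.choose n m : ℚ) := by
  obtain ⟨q, rfl⟩ : ∃ q, m = q + 1 := ⟨m - 1, by omega⟩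
  obtain ⟨k, rfl⟩ : ∃ k, n = k + 1 := ⟨n - 1, by omega⟩
  have hqk : q ≤ k := by omega
  -- translate the set to a Finset filter
  have hset : {w : List Step | isDyck (k + 1) w ∧ peaks w = q + 1}
      = ↑((Nara.words ((k + 1) + (k + 1))).filter
        (fun w => w.count Step.U = k + 1 ∧ w.count Step.D = k + 1 ∧ Nara.pOK w ∧
          Nara.pk w = q + 1)) := by
    ext w
    simp only [Set.mem_setOf_eq, Finset.coe_filter, Set.mem_setOf_eq, Nara.mem_words]
    constructor
    · rintro ⟨⟨hlen, hU, hD, hpre⟩, hpk⟩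
      exact ⟨by omega, hU, hD, fun p _ => hpre p, by rw [← Nara.peaks_eq_pk]; exact hpk⟩
    · rintro ⟨hlen, hU, hD, hOK, hpk⟩
      refine ⟨⟨by omega, hU, hD, ?_⟩, by rw [Nara.peaks_eq_pk]; exact hpk⟩
      intro p
      rcases le_or_gt p w.length with h3 | h3
      · exact hOK p h3
      · rw [List.take_of_length_le (le_of_lt h3), hU, hD]
  -- split by last letter
  have hcard : ((Nara.words ((k + 1) + (k + 1))).filter
      (fun w => w.count Step.U = k + 1 ∧ w.count Step.D = k + 1 ∧ Nara.pOK w ∧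
        Nara.pk w = q + 1)).card
      = Nara.cnt (k + 1) (k + 1) (q + 1) Step.U + Nara.cnt (k + 1) (k + 1) (q + 1) Step.D := by
    rw [Nara.card_filter_split_last]
    have hnil : ((Nara.words ((k + 1) + (k + 1))).filter
        (fun w => (w.count Step.U = k + 1 ∧ w.count Step.D = k + 1 ∧ Nara.pOK w ∧
          Nara.pk w = q + 1) ∧ w = [])).card = 0 := by
      rw [Finset.card_eq_zero, Finset.filter_eq_empty_iff]
      rintro w _ ⟨⟨hU, _, _, _⟩, rfl⟩
      simp only [List.count_nil] at hU
      omega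
    rw [hnil, Nat.add_zero]
    congr 1
    · rw [Nara.cnt]
      refine congrArg _ (Finset.filter_congr ?_)
      intro w _
      unfold Nara.P
      tauto
    · rw [Nara.cnt]
      refine congrArg _ (Finset.filter_congr ?_)
      intro w _
      unfold Nara.P
      tauto
  rw [hset, Set.ncard_coe_finset, hcard, Nara.cnt_U_diag, Nat.zero_add]
  -- closed form for the count
  have hT := (Nara.main_ind ((k + 1) + (k + 1)) (k + 1) (k + 1) rfl).2.1 q le_rfl
  rw [show Nara.cpred (k + 1) q = Nat.choose k q from rfl,
    show Nara.cpred (k + 1) (q + 1) = Nat.choose k (q + 1) from rfl] at hT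
  have cT : ((Nara.cnt (k + 1) (k + 1) (q + 1) Step.D : ℕ) : ℚ)
      + ((Nat.choose (k + 1) q : ℕ) : ℚ) * ((Nat.choose k (q + 1) : ℕ) : ℚ)
      = ((Nat.choose k q : ℕ) : ℚ) * ((Nat.choose (k + 1) (q + 1) : ℕ) : ℚ) := by
    exact_mod_cast hT
  have c1 : ((k : ℚ) + 1) * ((Nat.choose k q : ℕ) : ℚ)
      = ((Nat.choose (k + 1) (q + 1) : ℕ) : ℚ) * ((q : ℚ) + 1) := by
    exact_mod_cast Nat.add_one_mul_choose_eq k q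
  have c2 : ((Nat.choose (k + 1) (q + 1) : ℕ) : ℚ) * ((q : ℚ) + 1)
      = ((Nat.choose (k + 1) q : ℕ) : ℚ) * ((k : ℚ) + 1 - (q : ℚ)) := by
    have h2' : ((Nat.choose (k + 1) (q + 1) * (q + 1) : ℕ) : ℚ)
        = ((Nat.choose (k + 1) q : ℕ) : ℚ) * (((k + 1 - q : ℕ) : ℕ) : ℚ) := by
      exact_mod_cast Nat.choose_succ_right_eq (k + 1) q
    rw [Nat.cast_sub (by omega)] at h2'
    push_cast at h2' ⊢
    linear_combination h2'
  have c3 : ((Nat.choose k (q + 1) : ℕ) : ℚ) * ((q : ℚ) + 1)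
      = ((Nat.choose k q : ℕ) : ℚ) * ((k : ℚ) - (q : ℚ)) := by
    have h3' : ((Nat.choose k (q + 1) * (q + 1) : ℕ) : ℚ)
        = ((Nat.choose k q : ℕ) : ℚ) * (((k - q : ℕ) : ℕ) : ℚ) := by
      exact_mod_cast Nat.choose_succ_right_eq k q
    rw [Nat.cast_sub hqk] at h3'
    push_cast at h3' ⊢
    linear_combination h3'
  have hs : ((q : ℚ) + 1) ≠ 0 := by positivity
  have key : ((k : ℚ) + 1) * ((Nat.choose k (q + 1) : ℕ) : ℚ)
      = ((Nat.choose (k + 1) (q + 1) : ℕ) : ℚ) * ((k : ℚ) - (q : ℚ)) := by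
    refine mul_right_cancel₀ hs ?_
    linear_combination ((k : ℚ) + 1) * c3 + ((k : ℚ) - (q : ℚ)) * c1
  have main : ((Nara.cnt (k + 1) (k + 1) (q + 1) Step.D : ℕ) : ℚ) * ((k : ℚ) + 1)
      = ((Nat.choose (k + 1) q : ℕ) : ℚ) * ((Nat.choose (k + 1) (q + 1) : ℕ) : ℚ) := by
    linear_combination ((k : ℚ) + 1) * cT
      + ((Nat.choose (k + 1) (q + 1) : ℕ) : ℚ) * c1
      + ((Nat.choose (k + 1) (q + 1) : ℕ) : ℚ) * c2
      - ((Nat.choose (k + 1) q : ℕ) : ℚ) * key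
  have hN : ((k : ℚ) + 1) ≠ 0 := by positivity
  rw [show (q + 1) - 1 = q from rfl]
  push_cast
  field_simp
  linear_combination main
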